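/- Let 𝔪 = {f ∈ 𝕋[x_1,…,x_n] : f is not a constant polynomial C c with tangible c ∈ ℝ}. Then 𝔪 is an ideal of the semiring 𝕋[x_1,…,x_n], 𝔪 is proper, and every proper ideal of 𝕋[x_1,…,x_n] is contained in 𝔪; hence 𝕋[x_1,…,x_n] has a unique maximal proper ideal, namely 𝔪. -/

import Mathlib

/-- The extended tropical semiring `𝕋`: tangible reals `(a, false)`,
ghost reals `(a, true)`, and `none` = `-∞`. -/
def T : Type := Option (ℝ × Bool)

namespace T

/-- The tangible element of value `a`. -/
def tang (a : ℝ) : T := some (a, false)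

/-- The ghost element `a^ν` of value `a`. -/
def ghost (a : ℝ) : T := some (a, true)

/-- Tropical addition on `𝕋`. -/
noncomputable def add : T → T → T
  | none, y => y
  | some p, none => some p
  | some (a, s), some (b, t) =>
      if a < b then some (b, t) else if b < a then some (a, s) else some (a, true)

/-- Tropical multiplication on `𝕋`. -/
noncomputable def mul : T → T → T
  | none, _ => none
  | some _, none => none
  | some (a, s), some (b, t) => some (a + b, s || t)

lemma add_assoc' : ∀ x y z : T, add (add x y) z = add x (add y z) := by
  rintro (_ | ⟨a, s⟩) (_ | ⟨b, t⟩) (_ | ⟨c, u⟩) <;>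
    simp only [add] <;>
    (try split_ifs) <;>
    grind [add]

lemma add_comm' : ∀ x y : T, add x y = add y x := by
  rintro (_ | ⟨a, s⟩) (_ | ⟨b, t⟩) <;>
    simp only [add] <;>
    (try split_ifs) <;>
    grind

lemma mul_assoc' : ∀ x y z : T, mul (mul x y) z = mul x (mul y z) := by
  rintro (_ | ⟨a, s⟩) (_ | ⟨b, t⟩) (_ | ⟨c, u⟩) <;>
    simp [mul, add_assoc, Bool.or_assoc] <;> rfl

lemma mul_comm' : ∀ x y : T, mul x y = mul y x := by
  rintro (_ | ⟨a, s⟩) (_ | ⟨b, t⟩) <;> simp [mul, add_comm, Bool.or_comm] <;> rfl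

lemma left_distrib' : ∀ x y z : T, mul x (add y z) = add (mul x y) (mul x z) := by
  rintro (_ | ⟨a, s⟩) (_ | ⟨b, t⟩) (_ | ⟨c, u⟩) <;>
    simp only [add, mul] <;>
    (try split_ifs) <;>
    grind [add, mul]

noncomputable instance : Zero T := ⟨none⟩
noncomputable instance : One T := ⟨some (0, false)⟩
noncomputable instance : Add T := ⟨add⟩
noncomputable instance : Mul T := ⟨mul⟩

noncomputable instance : CommSemiring T where
  add := (· + ·)
  zero := 0
  add_assoc := add_assoc'
  zero_add := fun x => by cases x <;> rfl
  add_zero := fun x => by cases x <;> rfl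
  add_comm := add_comm'
  mul := (· * ·)
  one := 1
  mul_assoc := mul_assoc'
  one_mul := fun x => by
    show mul (some (0, false)) x = x
    rcases x with _ | ⟨a, s⟩ <;> simp [mul] <;> rfl
  mul_one := fun x => by
    show mul x (some (0, false)) = x
    rcases x with _ | ⟨a, s⟩ <;> simp [mul] <;> rfl
  mul_comm := mul_comm'
  zero_mul := fun x => by cases x <;> rfl
  mul_zero := fun x => by cases x <;> rfl
  left_distrib := left_distrib'
  right_distrib := fun x y z => by
    show mul (add x y) z = add (mul x z) (mul y z)
    rw [mul_comm', left_distrib', mul_comm' z x, mul_comm' z y]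
  nsmul := nsmulRec

/-- Membership in the ghost part `𝕌̄ = 𝕌 ∪ {-∞}` of `𝕋`. -/
def isGhost : T → Prop
  | none => True
  | some (_, s) => s = true

/-- Membership in the tangible part `ℝ ∪ {-∞}` of `𝕋`. -/
def isTangible : T → Prop
  | none => True
  | some (_, s) => s = false

/-- The underlying real value (junk value `0` at `-∞`); this is `π` on elements `≠ -∞`. -/
def val : T → ℝ
  | none => 0
  | some (a, _) => a

/-- The ghost map `ν`. -/
def nu : T → T
  | none => none
  | some (a, _) => some (a, true)

end T

namespace T

/-- The model value in the half line `[0,∞)`: `-∞ ↦ 0`, an element of value `a ↦ exp a`. -/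
noncomputable def gval : T → ℝ
  | none => 0
  | some (a, _) => Real.exp a

lemma nu_isGhost : ∀ x : T, isGhost (nu x)
  | none => trivial
  | some (_, _) => rfl

lemma gval_injOn_tang : Set.InjOn gval {x : T | isTangible x} := by
  rintro (_ | ⟨a, s⟩) hx (_ | ⟨b, t⟩) hy h <;>
    simp only [gval, Set.mem_setOf_eq, isTangible] at hx hy h
  · rfl
  · exact absurd h.symm (Real.exp_pos b).ne'
  · exact absurd h (Real.exp_pos a).ne'
  · rw [Real.exp_eq_exp] at h; subst hx; subst hy; subst h; rfl

lemma gval_injOn_ghost : Set.InjOn gval {x : T | isGhost x} := by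
  rintro (_ | ⟨a, s⟩) hx (_ | ⟨b, t⟩) hy h <;>
    simp only [gval, Set.mem_setOf_eq, isGhost] at hx hy h
  · rfl
  · exact absurd h.symm (Real.exp_pos b).ne'
  · exact absurd h (Real.exp_pos a).ne'
  · rw [Real.exp_eq_exp] at h; subst hx; subst hy; subst h; rfl

lemma gval_image_tang : gval '' {x : T | isTangible x} = Set.Ici 0 := by
  ext y
  constructor
  · rintro ⟨(_ | ⟨a, s⟩), hx, rfl⟩
    · exact Set.self_mem_Ici
    · exact le_of_lt (by simpa [gval] using Real.exp_pos a)
  · intro hy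
    rcases eq_or_lt_of_le (Set.mem_Ici.mp hy : (0 : ℝ) ≤ y) with h | h
    · exact ⟨none, trivial, h⟩
    · exact ⟨some (Real.log y, false), rfl, by simp [gval, Real.exp_log h]⟩

lemma gval_image_ghost : gval '' {x : T | isGhost x} = Set.Ici 0 := by
  ext y
  constructor
  · rintro ⟨(_ | ⟨a, s⟩), hx, rfl⟩
    · exact Set.self_mem_Ici
    · exact le_of_lt (by simpa [gval] using Real.exp_pos a)
  · intro hy
    rcases eq_or_lt_of_le (Set.mem_Ici.mp hy : (0 : ℝ) ≤ y) with h | h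
    · exact ⟨none, trivial, h⟩
    · exact ⟨some (Real.log y, true), rfl, by simp [gval, Real.exp_log h]⟩

/-- The closed sets of the topology on `𝕋`: both the tangible and the ghost layers are
closed in the model `[0,∞)` of `𝕌̄`, and the ghost image of the tangible layer is
contained in the set. -/
def TIsClosed (W : Set T) : Prop :=
  IsClosed (gval '' (W ∩ {x | isTangible x})) ∧
  IsClosed (gval '' (W ∩ {x | isGhost x})) ∧
  nu '' (W ∩ {x | isTangible x}) ⊆ W ∩ {x | isGhost x}

/-- The topology on `𝕋`. -/
noncomputable instance : TopologicalSpace T :=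
  TopologicalSpace.ofClosed {W | TIsClosed W}
    (by
      refine ⟨?_, ?_, ?_⟩ <;> simp [TIsClosed])
    (fun A hA => by
      rcases A.eq_empty_or_nonempty with rfl | hne
      · rw [Set.sInter_empty]
        refine ⟨?_, ?_, ?_⟩
        · rw [Set.univ_inter, gval_image_tang]; exact isClosed_Ici
        · rw [Set.univ_inter, gval_image_ghost]; exact isClosed_Ici
        · rintro y ⟨x, ⟨-, _⟩, rfl⟩
          exact ⟨trivial, nu_isGhost x⟩
      · have : Nonempty A := hne.to_subtype
        have h1 : (⋂₀ A) ∩ {x : T | isTangible x}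
            = ⋂ (W : A), ((W : Set T) ∩ {x | isTangible x}) := by
          ext x
          simp only [Set.mem_inter_iff, Set.mem_sInter, Set.mem_iInter, Set.mem_setOf_eq]
          constructor
          · rintro ⟨h, ht⟩ W; exact ⟨h W W.2, ht⟩
          · intro h
            obtain ⟨W, hW⟩ := hne
            exact ⟨fun V hV => (h ⟨V, hV⟩).1, (h ⟨W, hW⟩).2⟩
        have h2 : (⋂₀ A) ∩ {x : T | isGhost x}
            = ⋂ (W : A), ((W : Set T) ∩ {x | isGhost x}) := by
          ext x
          simp only [Set.mem_inter_iff, Set.mem_sInter, Set.mem_iInter, Set.mem_setOf_eq]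
          constructor
          · rintro ⟨h, ht⟩ W; exact ⟨h W W.2, ht⟩
          · intro h
            obtain ⟨W, hW⟩ := hne
            exact ⟨fun V hV => (h ⟨V, hV⟩).1, (h ⟨W, hW⟩).2⟩
        refine ⟨?_, ?_, ?_⟩
        · rw [h1, Set.InjOn.image_iInter_eq
            (gval_injOn_tang.mono (Set.iUnion_subset fun W => Set.inter_subset_right))]
          exact isClosed_iInter fun W => (hA W.2).1
        · rw [h2, Set.InjOn.image_iInter_eq
            (gval_injOn_ghost.mono (Set.iUnion_subset fun W => Set.inter_subset_right))]
          exact isClosed_iInter fun W => (hA W.2).2.1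
        · rintro y ⟨x, ⟨hx, hxt⟩, rfl⟩
          refine ⟨fun W hW => ((hA hW).2.2 ⟨x, ⟨hx W hW, hxt⟩, rfl⟩).1, nu_isGhost x⟩)
    (fun A hA B hB => by
      have h1 : (A ∪ B) ∩ {x : T | isTangible x}
          = (A ∩ {x | isTangible x}) ∪ (B ∩ {x | isTangible x}) :=
        Set.union_inter_distrib_right A B _
      have h2 : (A ∪ B) ∩ {x : T | isGhost x}
          = (A ∩ {x | isGhost x}) ∪ (B ∩ {x | isGhost x}) :=
        Set.union_inter_distrib_right A B _
      refine ⟨?_, ?_, ?_⟩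
      · rw [h1, Set.image_union]; exact hA.1.union hB.1
      · rw [h2, Set.image_union]; exact hA.2.1.union hB.2.1
      · rintro y ⟨x, ⟨hx, hxt⟩, rfl⟩
        rcases hx with hxA | hxB
        · have h := hA.2.2 ⟨x, ⟨hxA, hxt⟩, rfl⟩
          exact ⟨Or.inl h.1, h.2⟩
        · have h := hB.2.2 ⟨x, ⟨hxB, hxt⟩, rfl⟩
          exact ⟨Or.inr h.1, h.2⟩)

end T

namespace TropAux

open MvPolynomial

lemma tang_ne_zero (c : ℝ) : T.tang c ≠ (0 : T) := fun h => by cases h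

lemma T_add_eq_zero : ∀ x y : T, x + y = 0 → x = 0 ∧ y = 0 := by
  rintro (_ | ⟨a, s⟩) (_ | ⟨b, t⟩) h
  · exact ⟨rfl, rfl⟩
  all_goals (exfalso; revert h; show T.add _ _ ≠ none)
  · simp [T.add]; intro h; cases h
  · simp [T.add]; intro h; cases h
  · show (if a < b then some (b, t) else if b < a then some (a, s) else some (a, true) :
      Option (ℝ × Bool)) ≠ none
    split_ifs <;> simp

lemma T_mul_ne_zero : ∀ x y : T, x ≠ 0 → y ≠ 0 → x * y ≠ 0 := by
  rintro (_ | ⟨a, s⟩) (_ | ⟨b, t⟩) hx hy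
  · exact absurd rfl hx
  · exact absurd rfl hx
  · exact absurd rfl hy
  · show T.mul _ _ ≠ none; simp [T.mul]; intro h; cases h

lemma T_add_eq_tang {x y : T} {c : ℝ} (h : x + y = T.tang c) :
    x = T.tang c ∨ y = T.tang c := by
  rcases x with _ | ⟨a, s⟩ <;> rcases y with _ | ⟨b, t⟩
  · exact absurd h (fun h => by cases h)
  · exact Or.inr h
  · exact Or.inl h
  · replace h : T.add (some (a, s)) (some (b, t)) = T.tang c := h
    replace h : (if a < b then some (b, t) else if b < a then some (a, s) else some (a, true) :
      Option (ℝ × Bool)) = some (c, false) := h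
    split_ifs at h
    · exact Or.inr h
    · exact Or.inl h
    · exact absurd (congrArg (fun z => (Option.getD z (0, false)).2) h) (by simp [T.tang])

lemma T_mul_eq_tang {x y : T} {c : ℝ} (h : x * y = T.tang c) :
    ∃ b : ℝ, y = T.tang b := by
  rcases x with _ | ⟨a, s⟩ <;> rcases y with _ | ⟨b, t⟩
  · exact absurd h (fun h => by cases h)
  · exact absurd h (fun h => by cases h)
  · exact absurd h (fun h => by cases h)
  · refine ⟨b, ?_⟩
    replace h : T.mul (some (a, s)) (some (b, t)) = T.tang c := h
    simp only [T.mul, T.tang] at h ⊢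
    have ht : (s || t) = false := (Prod.mk.injEq _ _ _ _ ▸ (Option.some.injEq _ _ ▸ h)).2
    have : t = false := by
      cases t
      · rfl
      · simp at ht
    rw [this]

lemma T_sum_eq_zero {ι : Type*} {s : Finset ι} {g : ι → T} (h : ∑ j ∈ s, g j = 0) :
    ∀ i ∈ s, g i = 0 := by
  classical
  intro i hi
  have := Finset.add_sum_erase s g hi
  rw [h] at this
  exact (T_add_eq_zero _ _ this).1

/-- The set of non-tangible-constant polynomials is closed under multiplication by
anything. -/
lemma mul_mem_aux {n : ℕ} (p x : MvPolynomial (Fin n) T)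
    (hx : ¬ ∃ c : ℝ, x = MvPolynomial.C (T.tang c)) :
    ¬ ∃ c : ℝ, p * x = MvPolynomial.C (T.tang c) := by
  classical
  rintro ⟨c, hc⟩
  -- p ≠ 0
  have hp : p ≠ 0 := by
    rintro rfl
    rw [zero_mul] at hc
    have := congrArg (MvPolynomial.coeff 0) hc
    rw [MvPolynomial.coeff_zero, MvPolynomial.coeff_C] at this
    simp at this
    exact tang_ne_zero c this.symm
  obtain ⟨m', hm'⟩ : p.support.Nonempty := by
    rw [Finset.nonempty_iff_ne_empty, Ne, MvPolynomial.support_eq_empty]; exact hp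
  -- every monomial of x is 0
  have hsupp : ∀ m ∈ x.support, m = 0 := by
    intro m hm
    have hne : MvPolynomial.coeff (m' + m) (p * x) ≠ 0 := by
      rw [MvPolynomial.coeff_mul]
      intro h0
      have := T_sum_eq_zero h0 (m', m) (by simp)
      exact T_mul_ne_zero _ _ (MvPolynomial.mem_support_iff.1 hm')
        (MvPolynomial.mem_support_iff.1 hm) this
    rw [hc, MvPolynomial.coeff_C] at hne
    split_ifs at hne with h
    · have hm0 : m' + m = 0 := h.symm
      have : m ≤ m' + m := le_add_self
      rw [hm0] at this
      exact le_antisymm this zero_le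
    · exact absurd rfl hne
  have hxC : x = MvPolynomial.C (MvPolynomial.coeff 0 x) := by
    ext m
    rw [MvPolynomial.coeff_C]
    split_ifs with h
    · rw [← h]
    · by_contra hne
      exact h ((hsupp m (MvPolynomial.mem_support_iff.2 hne)).symm)
  have hcoeff : MvPolynomial.coeff 0 p * MvPolynomial.coeff 0 x = T.tang c := by
    have := congrArg (MvPolynomial.coeff 0) hc
    rw [MvPolynomial.coeff_C] at this
    simp only [if_pos rfl] at this
    rw [hxC, mul_comm, MvPolynomial.coeff_C_mul, if_pos trivial] at this
    rw [mul_comm]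
    exact this
  obtain ⟨b, hb⟩ := T_mul_eq_tang hcoeff
  exact hx ⟨b, by rw [hxC, hb]⟩

end TropAux

/-- Corollary `thm:singleMaximalIdeal`: the set of polynomials that
are not tangible constants is the unique maximal proper ideal of `𝕋[x_1,…,x_n]`. -/
theorem tropical_unique_maximal_ideal (n : ℕ) :
    ∃ M : Ideal (MvPolynomial (Fin n) T),
      (M : Set (MvPolynomial (Fin n) T))
          = {f : MvPolynomial (Fin n) T | ¬ ∃ c : ℝ, f = MvPolynomial.C (T.tang c)} ∧
      M ≠ ⊤ ∧
      ∀ I : Ideal (MvPolynomial (Fin n) T), I ≠ ⊤ → I ≤ M := by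
  classical
  open TropAux in
  refine ⟨{
    carrier := {f : MvPolynomial (Fin n) T | ¬ ∃ c : ℝ, f = MvPolynomial.C (T.tang c)}
    add_mem' := ?_
    zero_mem' := ?_
    smul_mem' := ?_ }, rfl, ?_, ?_⟩
  · rintro f g hf hg ⟨c, hc⟩
    have hcoeff0 : MvPolynomial.coeff 0 f + MvPolynomial.coeff 0 g = T.tang c := by
      have := congrArg (MvPolynomial.coeff 0) hc
      rwa [MvPolynomial.coeff_add, MvPolynomial.coeff_C, if_pos rfl] at this
    have hrest : ∀ m : (Fin n →₀ ℕ), m ≠ 0 →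
        MvPolynomial.coeff m f = 0 ∧ MvPolynomial.coeff m g = 0 := by
      intro m hm
      have := congrArg (MvPolynomial.coeff m) hc
      rw [MvPolynomial.coeff_add, MvPolynomial.coeff_C, if_neg (fun h => hm h.symm)] at this
      exact TropAux.T_add_eq_zero _ _ this
    rcases TropAux.T_add_eq_tang hcoeff0 with h0 | h0
    · refine hf ⟨c, ?_⟩
      ext m
      rw [MvPolynomial.coeff_C]
      split_ifs with h
      · rw [← h]; exact h0
      · exact (hrest m (fun hh => h hh.symm)).1
    · refine hg ⟨c, ?_⟩
      ext m
      rw [MvPolynomial.coeff_C]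
      split_ifs with h
      · rw [← h]; exact h0
      · exact (hrest m (fun hh => h hh.symm)).2
  · rintro ⟨c, hc⟩
    have := congrArg (MvPolynomial.coeff 0) hc
    rw [MvPolynomial.coeff_zero, MvPolynomial.coeff_C, if_pos rfl] at this
    exact TropAux.tang_ne_zero c this.symm
  · intro p x hx
    simpa only [smul_eq_mul, Set.mem_setOf_eq] using TropAux.mul_mem_aux p x hx
  · intro htop
    have h1 : (1 : MvPolynomial (Fin n) T) ∈
        ({f : MvPolynomial (Fin n) T | ¬ ∃ c : ℝ, f = MvPolynomial.C (T.tang c)} :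
          Set (MvPolynomial (Fin n) T)) := by
      have := htop ▸ (Submodule.mem_top (R := MvPolynomial (Fin n) T)
        (x := (1 : MvPolynomial (Fin n) T)))
      exact this
    exact h1 ⟨0, by rw [← MvPolynomial.C_1]; rfl⟩
  · intro I hI f hf
    rintro ⟨c, hc⟩
    apply hI
    rw [Ideal.eq_top_iff_one]
    have hmul : MvPolynomial.C (T.tang (-c)) * f = 1 := by
      rw [hc, ← map_mul]
      have : T.tang (-c) * T.tang c = 1 := by
        show T.mul (some (-c, false)) (some (c, false)) = some (0, false)
        simp [T.mul]; rfl
      rw [this, MvPolynomial.C_1]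
    rw [← hmul]
    exact Ideal.mul_mem_left I _ hf
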